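/- Under the Sinkhorn iteration, the sequence of iterates satisfies for all n ≥ 1: Ent(μ | π_{2n}) ∨ Ent(η | π_{2n+1}) ≤ (1/n)·Ent(P | P_0) for any coupling P of (η, μ) with finite relative entropy with respect to P_0, and n·Ent(μ|π_{2n}) → 0 as n → ∞. -/

import Mathlib

open MeasureTheory

/-- The relative entropy (Kullback–Leibler divergence) `Ent(μ₁ | μ₂) = ∫ log(dμ₁/dμ₂) dμ₁`. -/
noncomputable def Ent {α : Type*} [MeasurableSpace α] (μ₁ μ₂ : Measure α) : ℝ :=
  ∫ x, Real.log ((μ₁.rnDeriv μ₂ x).toReal) ∂μ₁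

section SinkAuxSection

open MeasureTheory Filter Real
open scoped ENNReal

namespace SinkAux

variable {γ δ ε : Type*} [MeasurableSpace γ] [MeasurableSpace δ] [MeasurableSpace ε]

/-- Core inequality: if `h ≤ toReal u - 1` a.e. with `∫⁻ u ≤ 1`, then `∫ h ≤ 0`. -/
lemma key_ineq (ν : Measure γ) [IsProbabilityMeasure ν] {h : γ → ℝ} {u : γ → ℝ≥0∞}
    (hint : Integrable h ν) (hu : AEMeasurable u ν)
    (hle : ∀ᵐ z ∂ν, h z ≤ (u z).toReal - 1)
    (hufin : ∀ᵐ z ∂ν, u z ≠ ∞)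
    (hu1 : ∫⁻ z, u z ∂ν ≤ 1) :
    ∫ z, h z ∂ν ≤ 0 := by
  have huint : Integrable (fun z => (u z).toReal) ν :=
    integrable_toReal_of_lintegral_ne_top hu (lt_of_le_of_lt hu1 (by norm_num)).ne
  have h1 : ∫ z, h z ∂ν ≤ ∫ z, ((u z).toReal - 1) ∂ν :=
    integral_mono_ae hint (huint.sub (integrable_const 1)) hle
  have h2 : ∫ z, (u z).toReal ∂ν ≤ 1 := by
    rw [integral_toReal hu (hufin.mono fun z hz => lt_top_iff_ne_top.2 hz)]
    calc (∫⁻ z, u z ∂ν).toReal ≤ (1 : ℝ≥0∞).toReal :=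
          ENNReal.toReal_mono (by norm_num) hu1
      _ = 1 := by simp
  rw [integral_sub huint (integrable_const 1)] at h1
  simp only [integral_const, measure_univ, probReal_univ, ENNReal.toReal_one, smul_eq_mul, one_mul] at h1
  linarith

/-- Gibbs' inequality: relative entropy between probability measures is nonnegative. -/
lemma gibbs (ν ρ : Measure γ) [IsProbabilityMeasure ν] [IsProbabilityMeasure ρ]
    (hac : ν ≪ ρ) (hint : Integrable (fun x => Real.log ((ν.rnDeriv ρ x).toReal)) ν) :
    0 ≤ ∫ x, Real.log ((ν.rnDeriv ρ x).toReal) ∂ν := by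
  have hpos : ∀ᵐ x ∂ν, 0 < ν.rnDeriv ρ x := Measure.rnDeriv_pos hac
  have hfin : ∀ᵐ x ∂ν, ν.rnDeriv ρ x < ∞ := hac.ae_le (Measure.rnDeriv_lt_top ν ρ)
  have key : ∫ x, - Real.log ((ν.rnDeriv ρ x).toReal) ∂ν ≤ 0 := by
    refine key_ineq ν hint.neg ((Measure.measurable_rnDeriv ν ρ).inv).aemeasurable ?_ ?_ ?_
    · filter_upwards [hpos, hfin] with x h0 hfx
      have ht : 0 < (ν.rnDeriv ρ x).toReal := ENNReal.toReal_pos h0.ne' hfx.ne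
      have : Real.log (((ν.rnDeriv ρ x))⁻¹).toReal ≤ ((ν.rnDeriv ρ x)⁻¹).toReal - 1 := by
        refine Real.log_le_sub_one_of_pos ?_
        rw [ENNReal.toReal_inv]
        exact inv_pos.2 ht
      rwa [ENNReal.toReal_inv, Real.log_inv, ← ENNReal.toReal_inv] at this
    · filter_upwards [hpos] with x h0
      simp [ENNReal.inv_ne_top, h0.ne']
    · have hν : ρ.withDensity (ν.rnDeriv ρ) = ν := Measure.withDensity_rnDeriv_eq ν ρ hac
      calc ∫⁻ x, (ν.rnDeriv ρ x)⁻¹ ∂ν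
          = ∫⁻ x, (ν.rnDeriv ρ x)⁻¹ ∂(ρ.withDensity (ν.rnDeriv ρ)) := by rw [hν]
        _ = ∫⁻ x, ν.rnDeriv ρ x * (ν.rnDeriv ρ x)⁻¹ ∂ρ := by
            rw [lintegral_withDensity_eq_lintegral_mul ρ (Measure.measurable_rnDeriv ν ρ)
              (show Measurable fun x => (ν.rnDeriv ρ x)⁻¹ from (Measure.measurable_rnDeriv ν ρ).inv)]
            rfl
        _ ≤ ∫⁻ _, 1 ∂ρ := lintegral_mono fun x => ENNReal.mul_inv_le_one _
        _ = 1 := by simp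
  have h' : - ∫ x, Real.log ((ν.rnDeriv ρ x).toReal) ∂ν ≤ 0 := by rwa [← integral_neg]
  linarith

/-- pushing forward a `withDensity` whose density factors through the map. -/
lemma map_withDensity (P : Measure γ) [SFinite P] {T : γ → δ} (hT : Measurable T)
    {w : δ → ℝ≥0∞} (hw : Measurable w) :
    (P.withDensity (fun z => w (T z))).map T = (P.map T).withDensity w := by
  ext s hs
  rw [Measure.map_apply hT hs, withDensity_apply _ (hT hs), withDensity_apply _ hs,
    ← setLIntegral_map hs hw hT]


/-- absolute continuity through a withDensity step -/
lemma ac_withDensity (P Q : Measure γ) [SigmaFinite P] {S : γ → ε} (hS : Measurable S)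
    {w : ε → ℝ≥0∞} (hw : Measurable w) (hQP : Q ≪ P)
    (hw0 : ∀ᵐ y ∂(Q.map S), w y ≠ 0) :
    Q ≪ P.withDensity (fun z => w (S z)) := by
  refine Measure.AbsolutelyContinuous.mk fun A hA hA0 => ?_
  rw [withDensity_apply _ hA] at hA0
  have hae : ∀ᵐ z ∂P, z ∈ A → w (S z) = 0 :=
    (ae_restrict_iff' hA).1 ((lintegral_eq_zero_iff (hw.comp hS)).1 hA0)
  have h1 : P (A ∩ {z | w (S z) ≠ 0}) = 0 := by
    rw [ae_iff] at hae
    refine measure_mono_null ?_ hae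
    intro z hz
    simp only [Set.mem_setOf_eq, not_forall]
    exact ⟨hz.1, hz.2⟩
  have h2 : Q {z | w (S z) = 0} = 0 := by
    have hms : MeasurableSet {y | w y = 0} := hw (measurableSet_singleton 0)
    have heq : Q {z | w (S z) = 0} = (Q.map S) {y | w y = 0} := by
      rw [Measure.map_apply hS hms]; rfl
    rw [heq]
    simpa only [ne_eq, not_not] using ae_iff.1 hw0
  have hle : Q A ≤ Q (A ∩ {z | w (S z) ≠ 0}) + Q {z | w (S z) = 0} := by
    refine (measure_mono ?_).trans (measure_union_le _ _)
    intro z hz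
    by_cases h : w (S z) = 0
    · exact Or.inr h
    · exact Or.inl ⟨hz, h⟩
  simp only [hQP h1, h2, add_zero, nonpos_iff_eq_zero] at hle
  exact hle

/-- Chain rule identity and entropy decomposition for one Sinkhorn half-step. -/
lemma chain_step (P Q : Measure γ) [IsProbabilityMeasure P] [IsProbabilityMeasure Q]
    {S : γ → ε} (hS : Measurable S) {w : ε → ℝ≥0∞} (hw : Measurable w)
    [IsProbabilityMeasure (P.withDensity (fun z => w (S z)))]
    (hQP : Q ≪ P)
    (hw0 : ∀ᵐ y ∂(Q.map S), w y ≠ 0) (hwfin : ∀ᵐ y ∂(Q.map S), w y ≠ ∞)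
    (hQint : Integrable (fun z => Real.log ((Q.rnDeriv P z).toReal)) Q)
    (hwint : Integrable (fun y => Real.log ((w y).toReal)) (Q.map S)) :
    Q ≪ P.withDensity (fun z => w (S z)) ∧
    Integrable (fun z =>
      Real.log ((Q.rnDeriv (P.withDensity (fun z => w (S z))) z).toReal)) Q ∧
    ∫ z, Real.log ((Q.rnDeriv P z).toReal) ∂Q =
      ∫ z, Real.log ((Q.rnDeriv (P.withDensity (fun z => w (S z))) z).toReal) ∂Q
        + ∫ y, Real.log ((w y).toReal) ∂(Q.map S) := by
  set P' := P.withDensity (fun z => w (S z)) with hP'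
  haveI : IsProbabilityMeasure P' := by rw [hP']; infer_instance
  have hwlog : Measurable fun y => Real.log ((w y).toReal) :=
    (ENNReal.measurable_toReal.comp hw).log
  have hQP' : Q ≪ P' := ac_withDensity P Q hS hw hQP hw0
  have hQeq : Q = P.withDensity ((fun z => w (S z)) * Q.rnDeriv P') := by
    rw [withDensity_mul (f := fun z => w (S z)) (g := Q.rnDeriv P') P (hw.comp hS) (Measure.measurable_rnDeriv Q P'), ← hP']
    exact (Measure.withDensity_rnDeriv_eq Q P' hQP').symm
  have hchain : Q.rnDeriv P =ᵐ[P] (fun z => w (S z)) * Q.rnDeriv P' := by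
    have h := Measure.rnDeriv_withDensity (f := (fun z => w (S z)) * Q.rnDeriv P') P
      ((hw.comp hS).mul (Measure.measurable_rnDeriv Q P'))
    rw [← hQeq] at h
    exact h
  have hchainQ : ∀ᵐ z ∂Q, Q.rnDeriv P z = w (S z) * Q.rnDeriv P' z := hQP.ae_le hchain
  have hw0' : ∀ᵐ z ∂Q, w (S z) ≠ 0 :=
    (ae_map_iff hS.aemeasurable (hw (measurableSet_singleton 0)).compl).1 hw0
  have hwfin' : ∀ᵐ z ∂Q, w (S z) ≠ ∞ :=
    (ae_map_iff hS.aemeasurable (hw (measurableSet_singleton ∞)).compl).1 hwfin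
  have hd0 : ∀ᵐ z ∂Q, Q.rnDeriv P' z ≠ 0 :=
    (Measure.rnDeriv_pos hQP').mono fun z hz => hz.ne'
  have hdfin : ∀ᵐ z ∂Q, Q.rnDeriv P' z < ∞ := hQP'.ae_le (Measure.rnDeriv_lt_top Q P')
  have hlog : ∀ᵐ z ∂Q, Real.log ((Q.rnDeriv P z).toReal)
      = Real.log ((Q.rnDeriv P' z).toReal) + Real.log ((w (S z)).toReal) := by
    filter_upwards [hchainQ, hw0', hwfin', hd0, hdfin] with z hc h0 hfx hd0' hdfx
    rw [hc, ENNReal.toReal_mul, Real.log_mul, add_comm]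
    · exact ENNReal.toReal_ne_zero.2 ⟨h0, hfx⟩
    · exact ENNReal.toReal_ne_zero.2 ⟨hd0', hdfx.ne⟩
  have hwSint : Integrable (fun z => Real.log ((w (S z)).toReal)) Q :=
    (integrable_map_measure (g := fun y => Real.log ((w y).toReal)) (f := S)
      hwlog.aestronglyMeasurable hS.aemeasurable).1 hwint
  have hint' : Integrable (fun z => Real.log ((Q.rnDeriv P' z).toReal)) Q := by
    refine (hQint.sub hwSint).congr ?_
    filter_upwards [hlog] with z hz
    simp only [Pi.sub_apply]
    rw [hz]; ring
  refine ⟨hQP', hint', ?_⟩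
  have heq : ∫ z, Real.log ((Q.rnDeriv P z).toReal) ∂Q
      = ∫ z, (Real.log ((Q.rnDeriv P' z).toReal) + Real.log ((w (S z)).toReal)) ∂Q :=
    integral_congr_ae hlog
  rw [heq, integral_add hint' hwSint]
  congr 1
  exact (integral_map (f := fun y => Real.log ((w y).toReal)) hS.aemeasurable
    hwlog.aestronglyMeasurable).symm


lemma ofReal_max_zero (a : ℝ) : ENNReal.ofReal (max a 0) = ENNReal.ofReal a := by
  rcases le_total a 0 with h | h
  · rw [max_eq_right h, ENNReal.ofReal_zero, ENNReal.ofReal_of_nonpos h]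
  · rw [max_eq_left h]

lemma withDensity_ae_ne_zero (P : Measure γ) {S : γ → ε} (hS : Measurable S)
    {w : ε → ℝ≥0∞} (hw : Measurable w) :
    ∀ᵐ z ∂(P.withDensity fun z => w (S z)), w (S z) ≠ 0 := by
  rw [ae_iff]
  simp only [ne_eq, not_not]
  have hms : MeasurableSet {z | w (S z) = 0} := (hw.comp hS) (measurableSet_singleton 0)
  rw [withDensity_apply _ hms]
  have : ∀ z ∈ {z | w (S z) = 0}, w (S z) = (fun _ => (0:ℝ≥0∞)) z := fun z hz => hz
  rw [setLIntegral_congr_fun hms this]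
  simp

/-- Data processing, first form: `KL(T#P' | T#P) ≤ ∫ log w(S z) dP'` where
`P' = w(S ·) • P`; including integrability of the left-hand side. -/
lemma DPa (P : Measure γ) [IsProbabilityMeasure P] {T : γ → δ} {S : γ → ε}
    (hT : Measurable T) (hS : Measurable S) {w : ε → ℝ≥0∞} (hw : Measurable w)
    [hP' : IsProbabilityMeasure (P.withDensity fun z => w (S z))]
    (hwfin : ∀ᵐ z ∂P, w (S z) ≠ ∞)
    (hB : Integrable (fun z => Real.log ((w (S z)).toReal))
      (P.withDensity fun z => w (S z))) :
    Integrable (fun x => Real.log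
        ((((P.withDensity fun z => w (S z)).map T).rnDeriv (P.map T) x).toReal))
      ((P.withDensity fun z => w (S z)).map T) ∧
    ∫ x, Real.log ((((P.withDensity fun z => w (S z)).map T).rnDeriv (P.map T) x).toReal)
        ∂((P.withDensity fun z => w (S z)).map T)
      ≤ ∫ z, Real.log ((w (S z)).toReal) ∂(P.withDensity fun z => w (S z)) := by
  set P' : Measure γ := P.withDensity fun z => w (S z) with hP'def
  set mp : Measure δ := P.map T with hmpdef
  set mq : Measure δ := P'.map T with hmqdef
  haveI : IsProbabilityMeasure mp := Measure.isProbabilityMeasure_map hT.aemeasurable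
  haveI : IsProbabilityMeasure mq := Measure.isProbabilityMeasure_map hT.aemeasurable
  set r : δ → ℝ≥0∞ := mq.rnDeriv mp with hrdef
  have hrm : Measurable r := Measure.measurable_rnDeriv mq mp
  set L : δ → ℝ := fun x => Real.log ((r x).toReal) with hLdef
  have hLm : Measurable L := (ENNReal.measurable_toReal.comp hrm).log
  set B : ℝ := ∫ z, Real.log ((w (S z)).toReal) ∂P' with hBdef
  have hP'P : P' ≪ P := withDensity_absolutelyContinuous _ _
  have hmqmp : mq ≪ mp := hP'P.map hT
  have hmqwd : mq = mp.withDensity r := (Measure.withDensity_rnDeriv_eq mq mp hmqmp).symm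
  -- negative part of L is integrable
  set N : δ → ℝ := fun x => max (-L x) 0 with hNdef
  have hNm : Measurable N := hLm.neg.max measurable_const
  have hNnn : ∀ x, 0 ≤ N x := fun x => le_max_right _ _
  have hNL : ∀ x, -N x ≤ L x := fun x => neg_le.2 (le_max_left _ _)
  have hNint : Integrable N mq := by
    refine ⟨hNm.aestronglyMeasurable, ?_⟩
    rw [hasFiniteIntegral_iff_norm]
    have hnorm : ∀ x, ENNReal.ofReal ‖N x‖ = ENNReal.ofReal (N x) := by
      intro x; rw [Real.norm_eq_abs, abs_of_nonneg (hNnn x)]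
    calc ∫⁻ x, ENNReal.ofReal ‖N x‖ ∂mq = ∫⁻ x, ENNReal.ofReal (N x) ∂mq := by
          exact lintegral_congr hnorm
      _ = ∫⁻ x, (r * fun x => ENNReal.ofReal (N x)) x ∂mp := by
          rw [hmqwd, lintegral_withDensity_eq_lintegral_mul mp hrm
            (show Measurable fun x => ENNReal.ofReal (N x) from
              ENNReal.measurable_ofReal.comp hNm)]
      _ ≤ ∫⁻ _, 1 ∂mp := by
          refine lintegral_mono fun x => ?_
          simp only [Pi.mul_apply]
          rcases eq_or_ne (r x) 0 with h0 | h0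
          · simp [hNdef, hLdef, h0]
          rcases eq_or_ne (r x) ∞ with hi | hi
          · simp [hNdef, hLdef, hi]
          have ht : 0 < (r x).toReal := ENNReal.toReal_pos h0 hi
          rcases le_or_gt 1 ((r x).toReal) with h1 | h1
          · have : N x = 0 := by
              simp only [hNdef, hLdef, max_eq_right_iff, neg_nonpos]
              exact Real.log_nonneg h1
            simp [this]
          · have hNx : N x = -Real.log ((r x).toReal) := by
              simp only [hNdef, hLdef, max_eq_left_iff, Left.nonneg_neg_iff]
              exact le_of_lt (Real.log_neg ht h1)
            have habs : (r x).toReal * (-Real.log ((r x).toReal)) ≤ 1 := by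
              have := Real.abs_log_mul_self_lt ((r x).toReal) ht h1.le
              rw [abs_mul, abs_of_pos ht, abs_of_neg (Real.log_neg ht h1)] at this
              nlinarith [this]
            calc r x * ENNReal.ofReal (N x)
                = ENNReal.ofReal ((r x).toReal) * ENNReal.ofReal (N x) := by
                  rw [ENNReal.ofReal_toReal hi]
              _ = ENNReal.ofReal ((r x).toReal * (-Real.log ((r x).toReal))) := by
                  rw [hNx, ← ENNReal.ofReal_mul ht.le]
              _ ≤ 1 := by
                  rw [← ENNReal.ofReal_one]
                  exact ENNReal.ofReal_le_ofReal habs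
      _ = 1 := by simp
      _ < ∞ := by norm_num
  -- truncations
  set ψ : ℕ → δ → ℝ := fun n x => min (L x) n with hψdef
  have hψm : ∀ n, Measurable (ψ n) := fun n => hLm.min measurable_const
  have hψint : ∀ n, Integrable (ψ n) mq := by
    intro n
    refine Integrable.mono' ((integrable_const (n:ℝ)).add hNint)
      (hψm n).aestronglyMeasurable (ae_of_all _ fun x => ?_)
    have hp1 : ψ n x ≤ (n:ℝ) := min_le_right _ _
    have hp2 : -N x ≤ ψ n x := by
      rcases le_total (L x) (n:ℝ) with h | h
      · rw [show ψ n x = L x from min_eq_left h]; exact hNL x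
      · rw [show ψ n x = (n:ℝ) from min_eq_right h]
        have : (0:ℝ) ≤ n := Nat.cast_nonneg n
        linarith [hNnn x]
    rw [Real.norm_eq_abs, abs_le]
    have hn0 : (0:ℝ) ≤ n := Nat.cast_nonneg n
    constructor
    · simp only [Pi.add_apply]; linarith [hNnn x]
    · simp only [Pi.add_apply]; linarith [hNnn x]
  -- a.e. facts on P'
  have hw0' : ∀ᵐ z ∂P', w (S z) ≠ 0 := withDensity_ae_ne_zero P hS hw
  have hwfin' : ∀ᵐ z ∂P', w (S z) ≠ ∞ := hP'P.ae_le hwfin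
  have hrpos : ∀ᵐ x ∂mq, r x ≠ 0 := (Measure.rnDeriv_pos hmqmp).mono fun x hx => hx.ne'
  have hrfin : ∀ᵐ x ∂mq, r x ≠ ∞ := by
    have h' : ∀ᵐ x ∂mq, r x < ∞ := hmqmp.ae_le (Measure.rnDeriv_lt_top mq mp)
    filter_upwards [h'] with x hx using hx.ne
  have hrpos' : ∀ᵐ z ∂P', r (T z) ≠ 0 :=
    (ae_map_iff hT.aemeasurable (hrm (measurableSet_singleton 0)).compl).1 hrpos
  have hrfin' : ∀ᵐ z ∂P', r (T z) ≠ ∞ :=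
    (ae_map_iff hT.aemeasurable (hrm (measurableSet_singleton ∞)).compl).1 hrfin
  -- truncated inequality
  have hψle : ∀ n, ∫ x, ψ n x ∂mq ≤ B := by
    intro n
    have hmap : ∫ x, ψ n x ∂mq = ∫ z, ψ n (T z) ∂P' :=
      integral_map hT.aemeasurable (hψm n).aestronglyMeasurable
    have hcomp : Integrable (fun z => ψ n (T z)) P' :=
      (integrable_map_measure (hψm n).aestronglyMeasurable hT.aemeasurable).1 (hψint n)
    have hkey : ∫ z, (ψ n (T z) - Real.log ((w (S z)).toReal)) ∂P' ≤ 0 := by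
      refine key_ineq P' (u := fun z => r (T z) * (w (S z))⁻¹) (hcomp.sub hB)
        ((show Measurable fun z => r (T z) * (w (S z))⁻¹ from
          (hrm.comp hT).mul ((hw.comp hS).inv)).aemeasurable) ?_ ?_ ?_
      · filter_upwards [hw0', hwfin', hrpos', hrfin'] with z h0 hfx hr0 hrfx
        have htw : 0 < (w (S z)).toReal := ENNReal.toReal_pos h0 hfx
        have htr : 0 < (r (T z)).toReal := ENNReal.toReal_pos hr0 hrfx
        have h1 : ψ n (T z) - Real.log ((w (S z)).toReal)
            ≤ L (T z) - Real.log ((w (S z)).toReal) :=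
          sub_le_sub_right (min_le_left _ _) _
        have h2 : L (T z) - Real.log ((w (S z)).toReal)
            = Real.log ((r (T z)).toReal / (w (S z)).toReal) := by
          rw [Real.log_div htr.ne' htw.ne']
        have h3 : Real.log ((r (T z)).toReal / (w (S z)).toReal)
            ≤ (r (T z)).toReal / (w (S z)).toReal - 1 :=
          Real.log_le_sub_one_of_pos (div_pos htr htw)
        have h4 : (r (T z) * (w (S z))⁻¹).toReal
            = (r (T z)).toReal / (w (S z)).toReal := by
          rw [ENNReal.toReal_mul, ENNReal.toReal_inv, div_eq_mul_inv]
        rw [h4]; linarith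
      · filter_upwards [hw0', hrfin'] with z h0 hrfx
        exact ENNReal.mul_ne_top hrfx (ENNReal.inv_ne_top.2 h0)
      · have e1 : ∫⁻ z, r (T z) * (w (S z))⁻¹ ∂P'
            = ∫⁻ z, ((fun z => w (S z)) * fun z => r (T z) * (w (S z))⁻¹) z ∂P := by
          rw [hP'def, lintegral_withDensity_eq_lintegral_mul P
            (show Measurable fun z => w (S z) from hw.comp hS)
            (show Measurable fun z => r (T z) * (w (S z))⁻¹ from
              (hrm.comp hT).mul ((hw.comp hS).inv))]
        have e2 : ∀ z, ((fun z => w (S z)) * fun z => r (T z) * (w (S z))⁻¹) z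
            ≤ r (T z) := by
          intro z
          simp only [Pi.mul_apply]
          calc w (S z) * (r (T z) * (w (S z))⁻¹) = r (T z) * (w (S z) * (w (S z))⁻¹) := by
                ring
            _ ≤ r (T z) * 1 := mul_le_mul_right (ENNReal.mul_inv_le_one _) _
            _ = r (T z) := mul_one _
        calc ∫⁻ z, r (T z) * (w (S z))⁻¹ ∂P'
            = ∫⁻ z, ((fun z => w (S z)) * fun z => r (T z) * (w (S z))⁻¹) z ∂P := e1
          _ ≤ ∫⁻ z, r (T z) ∂P := lintegral_mono e2
          _ = ∫⁻ x, r x ∂mp := (lintegral_map hrm hT).symm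
          _ ≤ mq Set.univ := Measure.lintegral_rnDeriv_le
          _ = 1 := measure_univ
    have hsplit : ∫ z, (ψ n (T z) - Real.log ((w (S z)).toReal)) ∂P'
        = ∫ z, ψ n (T z) ∂P' - B := integral_sub hcomp hB
    rw [hsplit] at hkey
    rw [hmap]; linarith
  -- integrability of the positive part, hence of L
  set C : ℝ := ∫ x, N x ∂mq with hCdef
  have hmaxint : ∀ n, Integrable (fun x => max (ψ n x) 0) mq := by
    intro n
    refine Integrable.mono' (hψint n).abs ((hψm n).max measurable_const).aestronglyMeasurable
      (ae_of_all _ fun x => ?_)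
    rcases le_total (ψ n x) 0 with h | h
    · rw [Real.norm_eq_abs, max_eq_right h, abs_zero]
      exact abs_nonneg _
    · rw [Real.norm_eq_abs, max_eq_left h, abs_of_nonneg h]
  have hmaxle : ∀ n, ∫ x, max (ψ n x) 0 ∂mq ≤ B + C := by
    intro n
    have hpt : ∀ x, max (ψ n x) 0 ≤ ψ n x + N x := by
      intro x
      rcases le_total (ψ n x) 0 with h | h
      · rw [max_eq_right h]
        have : -L x ≤ N x := le_max_left _ _
        have hx : ψ n x = L x ∨ 0 ≤ ψ n x := by
          rcases le_total (L x) n with h' | h'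
          · exact Or.inl (min_eq_left (by exact_mod_cast h'))
          · exact Or.inr (le_min (le_trans (Nat.cast_nonneg n) (by exact_mod_cast h'))
              (Nat.cast_nonneg n))
        rcases hx with hx | hx
        · rw [hx]; linarith
        · linarith [hNnn x]
      · rw [max_eq_left h]; linarith [hNnn x]
    calc ∫ x, max (ψ n x) 0 ∂mq ≤ ∫ x, (ψ n x + N x) ∂mq :=
          integral_mono (hmaxint n) ((hψint n).add hNint) hpt
      _ = (∫ x, ψ n x ∂mq) + C := integral_add (hψint n) hNint
      _ ≤ B + C := by linarith [hψle n]
  have hBC0 : (0:ℝ) ≤ B + C := by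
    have := hmaxle 0
    have h0 : (0:ℝ) ≤ ∫ x, max (ψ 0 x) 0 ∂mq :=
      integral_nonneg fun x => le_max_right _ _
    linarith
  have hLlim : ∀ x, (⨆ n : ℕ, ENNReal.ofReal (ψ n x)) = ENNReal.ofReal (L x) := by
    intro x
    refine le_antisymm (iSup_le fun n => ENNReal.ofReal_le_ofReal (min_le_left _ _)) ?_
    have : ψ ⌈L x⌉₊ x = L x := min_eq_left (Nat.le_ceil _)
    calc ENNReal.ofReal (L x) = ENNReal.ofReal (ψ ⌈L x⌉₊ x) := by rw [this]
      _ ≤ ⨆ n : ℕ, ENNReal.ofReal (ψ n x) := le_iSup (fun n => ENNReal.ofReal (ψ n x)) _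
  have hmono : Monotone fun n : ℕ => fun x => ENNReal.ofReal (ψ n x) := by
    intro m n hmn
    refine fun x => ENNReal.ofReal_le_ofReal (min_le_min le_rfl ?_)
    exact_mod_cast Nat.cast_le.2 hmn
  have hLpos_lint : ∫⁻ x, ENNReal.ofReal (L x) ∂mq ≤ ENNReal.ofReal (B + C) := by
    have : ∫⁻ x, ENNReal.ofReal (L x) ∂mq
        = ⨆ n : ℕ, ∫⁻ x, ENNReal.ofReal (ψ n x) ∂mq := by
      rw [← lintegral_iSup (fun n => show Measurable fun x => ENNReal.ofReal (ψ n x) from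
        ENNReal.measurable_ofReal.comp (hψm n)) hmono]
      exact lintegral_congr fun x => (hLlim x).symm
    rw [this]
    refine iSup_le fun n => ?_
    calc ∫⁻ x, ENNReal.ofReal (ψ n x) ∂mq
        = ∫⁻ x, ENNReal.ofReal (max (ψ n x) 0) ∂mq := by
          exact lintegral_congr fun x => (ofReal_max_zero _).symm
      _ = ENNReal.ofReal (∫ x, max (ψ n x) 0 ∂mq) :=
          (ofReal_integral_eq_lintegral_ofReal (hmaxint n)
            (ae_of_all _ fun x => le_max_right _ _)).symm
      _ ≤ ENNReal.ofReal (B + C) := ENNReal.ofReal_le_ofReal (hmaxle n)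
  have hLpint : Integrable (fun x => max (L x) 0) mq := by
    refine ⟨(hLm.max measurable_const).aestronglyMeasurable, ?_⟩
    rw [hasFiniteIntegral_iff_norm]
    have : ∀ x, ENNReal.ofReal ‖max (L x) 0‖ = ENNReal.ofReal (L x) := by
      intro x
      rw [Real.norm_eq_abs, abs_of_nonneg (le_max_right _ _), ofReal_max_zero]
    calc ∫⁻ x, ENNReal.ofReal ‖max (L x) 0‖ ∂mq = ∫⁻ x, ENNReal.ofReal (L x) ∂mq :=
          lintegral_congr this
      _ ≤ ENNReal.ofReal (B + C) := hLpos_lint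
      _ < ∞ := ENNReal.ofReal_lt_top
  have hLint : Integrable L mq := by
    have : L = fun x => max (L x) 0 - max (-L x) 0 := by
      funext x; rw [max_zero_sub_max_neg_zero_eq_self]
    rw [this]
    exact hLpint.sub hNint
  refine ⟨hLint, ?_⟩
  -- dominated convergence
  have htend : Tendsto (fun n => ∫ x, ψ n x ∂mq) atTop (nhds (∫ x, L x ∂mq)) := by
    refine tendsto_integral_of_dominated_convergence (fun x => |L x| + 1)
      (fun n => (hψm n).aestronglyMeasurable) (hLint.abs.add (integrable_const 1)) ?_ ?_
    · intro n
      refine ae_of_all _ fun x => ?_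
      rw [Real.norm_eq_abs, abs_le]
      have h1 : ψ n x ≤ |L x| := by
        rcases le_total (L x) (n:ℝ) with h | h
        · rw [show ψ n x = L x from min_eq_left h]; exact le_abs_self _
        · rw [show ψ n x = (n:ℝ) from min_eq_right h]
          exact le_trans h (le_abs_self _)
      have h2 : -|L x| ≤ ψ n x := by
        rcases le_total (L x) (n:ℝ) with h | h
        · rw [show ψ n x = L x from min_eq_left h]; exact neg_abs_le _
        · rw [show ψ n x = (n:ℝ) from min_eq_right h]
          have : (0:ℝ) ≤ n := Nat.cast_nonneg n
          linarith [abs_nonneg (L x)]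
      have hb : (fun x => |L x| + 1) x = |L x| + 1 := rfl
      show -(|L x| + 1) ≤ ψ n x ∧ ψ n x ≤ |L x| + 1
      constructor <;> linarith
    · refine ae_of_all _ fun x => ?_
      have : ∀ᶠ n : ℕ in atTop, ψ n x = L x := by
        filter_upwards [eventually_ge_atTop ⌈L x⌉₊] with n hn
        exact min_eq_left (le_trans (Nat.le_ceil _) (by exact_mod_cast hn))
      exact Tendsto.congr' (by filter_upwards [this] with n hn using hn.symm)
        tendsto_const_nhds
  exact le_of_tendsto htend (Eventually.of_forall hψle)

/-- Data processing, second form: `KL(T#P | T#P') ≤ -∫ log w(S z) dP`. -/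
lemma DPb (P : Measure γ) [IsProbabilityMeasure P] {T : γ → δ} {S : γ → ε}
    (hT : Measurable T) (hS : Measurable S) {w : ε → ℝ≥0∞} (hw : Measurable w)
    [hP' : IsProbabilityMeasure (P.withDensity fun z => w (S z))]
    (hac : P.map T ≪ (P.withDensity fun z => w (S z)).map T)
    (hw0 : ∀ᵐ z ∂P, w (S z) ≠ 0) (hwfin : ∀ᵐ z ∂P, w (S z) ≠ ∞)
    (hint1 : Integrable (fun x => Real.log
        (((P.map T).rnDeriv ((P.withDensity fun z => w (S z)).map T) x).toReal)) (P.map T))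
    (hint2 : Integrable (fun z => Real.log ((w (S z)).toReal)) P) :
    ∫ x, Real.log (((P.map T).rnDeriv ((P.withDensity fun z => w (S z)).map T) x).toReal)
        ∂(P.map T)
      ≤ - ∫ z, Real.log ((w (S z)).toReal) ∂P := by
  set P' : Measure γ := P.withDensity fun z => w (S z) with hP'def
  set mp : Measure δ := P.map T with hmpdef
  set mq : Measure δ := P'.map T with hmqdef
  haveI : IsProbabilityMeasure mp := Measure.isProbabilityMeasure_map hT.aemeasurable
  haveI : IsProbabilityMeasure mq := Measure.isProbabilityMeasure_map hT.aemeasurable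
  set G : δ → ℝ≥0∞ := mp.rnDeriv mq with hGdef
  have hGm : Measurable G := Measure.measurable_rnDeriv mp mq
  have hG0 : ∀ᵐ x ∂mp, G x ≠ 0 := (Measure.rnDeriv_pos hac).mono fun x hx => hx.ne'
  have hGfin : ∀ᵐ x ∂mp, G x ≠ ∞ := by
    have h' : ∀ᵐ x ∂mp, G x < ∞ := hac.ae_le (Measure.rnDeriv_lt_top mp mq)
    filter_upwards [h'] with x hx using hx.ne
  have hG0' : ∀ᵐ z ∂P, G (T z) ≠ 0 :=
    (ae_map_iff hT.aemeasurable (hGm (measurableSet_singleton 0)).compl).1 hG0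
  have hGfin' : ∀ᵐ z ∂P, G (T z) ≠ ∞ :=
    (ae_map_iff hT.aemeasurable (hGm (measurableSet_singleton ∞)).compl).1 hGfin
  have hGTint : Integrable (fun z => Real.log ((G (T z)).toReal)) P :=
    (integrable_map_measure (g := fun x => Real.log ((G x).toReal))
      ((ENNReal.measurable_toReal.comp hGm).log).aestronglyMeasurable hT.aemeasurable).1 hint1
  have hkey : ∫ z, (Real.log ((G (T z)).toReal) + Real.log ((w (S z)).toReal)) ∂P ≤ 0 := by
    refine key_ineq P (u := fun z => G (T z) * w (S z)) (hGTint.add hint2)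
      ((show Measurable fun z => G (T z) * w (S z) from
        (hGm.comp hT).mul (hw.comp hS)).aemeasurable) ?_ ?_ ?_
    · filter_upwards [hw0, hwfin, hG0', hGfin'] with z h0 hfx hg0 hgfx
      have htw : 0 < (w (S z)).toReal := ENNReal.toReal_pos h0 hfx
      have htg : 0 < (G (T z)).toReal := ENNReal.toReal_pos hg0 hgfx
      have h1 : Real.log ((G (T z)).toReal) + Real.log ((w (S z)).toReal)
          = Real.log ((G (T z)).toReal * (w (S z)).toReal) :=
        (Real.log_mul htg.ne' htw.ne').symm
      have h2 : Real.log ((G (T z)).toReal * (w (S z)).toReal)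
          ≤ (G (T z)).toReal * (w (S z)).toReal - 1 :=
        Real.log_le_sub_one_of_pos (mul_pos htg htw)
      rw [h1, ENNReal.toReal_mul]
      exact h2
    · filter_upwards [hwfin, hGfin'] with z hfx hgfx
      exact ENNReal.mul_ne_top hgfx hfx
    · have e1 : ∫⁻ z, G (T z) * w (S z) ∂P
          = ∫⁻ z, ((fun z => w (S z)) * fun z => G (T z)) z ∂P :=
        lintegral_congr fun z => mul_comm _ _
      have e2 : ∫⁻ z, ((fun z => w (S z)) * fun z => G (T z)) z ∂P
          = ∫⁻ z, G (T z) ∂P' := by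
        rw [hP'def, lintegral_withDensity_eq_lintegral_mul P
          (show Measurable fun z => w (S z) from hw.comp hS)
          (show Measurable fun z => G (T z) from hGm.comp hT)]
      calc ∫⁻ z, G (T z) * w (S z) ∂P = ∫⁻ z, G (T z) ∂P' := by rw [e1, e2]
        _ = ∫⁻ x, G x ∂mq := (lintegral_map hGm hT).symm
        _ ≤ mp Set.univ := Measure.lintegral_rnDeriv_le
        _ = 1 := measure_univ
  have hsplit : ∫ z, (Real.log ((G (T z)).toReal) + Real.log ((w (S z)).toReal)) ∂P
      = ∫ z, Real.log ((G (T z)).toReal) ∂P + ∫ z, Real.log ((w (S z)).toReal) ∂P :=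
    integral_add hGTint hint2
  have hmap : ∫ x, Real.log ((G x).toReal) ∂mp = ∫ z, Real.log ((G (T z)).toReal) ∂P :=
    integral_map (f := fun x => Real.log ((G x).toReal)) hT.aemeasurable
      ((ENNReal.measurable_toReal.comp hGm).log).aestronglyMeasurable
  rw [hmap]
  rw [hsplit] at hkey
  linarith


/-- negated log-density under mutual absolute continuity -/
lemma neg_log_rnDeriv (ρ τ : Measure δ) [SigmaFinite ρ] [SigmaFinite τ] (h : τ ≪ ρ) :
    ∀ᵐ x ∂τ, Real.log ((ρ.rnDeriv τ x).toReal) = - Real.log ((τ.rnDeriv ρ x).toReal) := by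
  filter_upwards [Measure.inv_rnDeriv' h] with x hx
  rw [← hx, Pi.inv_apply, ENNReal.toReal_inv, Real.log_inv, neg_neg]

/-- One full Sinkhorn step decreases the marginal entropy. -/
lemma mono_step (A B C : Measure γ) [IsProbabilityMeasure A] [IsProbabilityMeasure B]
    [IsProbabilityMeasure C]
    {T : γ → δ} {S : γ → ε} (hT : Measurable T) (hS : Measurable S)
    (ρ : Measure δ) (ν : Measure ε) [IsProbabilityMeasure ρ] [IsProbabilityMeasure ν]
    (hAT : A.map T = ρ) (hBS : B.map S = ν)
    (hupdB : B = A.withDensity (fun z => ν.rnDeriv (A.map S) (S z)))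
    (hupdC : C = B.withDensity (fun z => ρ.rnDeriv (B.map T) (T z)))
    (hacν' : ν ≪ C.map S)
    (hintν : Integrable (fun y => Real.log ((ν.rnDeriv (A.map S) y).toReal)) ν)
    (hintν' : Integrable (fun y => Real.log ((ν.rnDeriv (C.map S) y).toReal)) ν) :
    ∫ y, Real.log ((ν.rnDeriv (C.map S) y).toReal) ∂ν
      ≤ ∫ y, Real.log ((ν.rnDeriv (A.map S) y).toReal) ∂ν := by
  set πS : Measure ε := A.map S with hπS
  set πT : Measure δ := B.map T with hπT
  haveI : IsProbabilityMeasure πS := Measure.isProbabilityMeasure_map hS.aemeasurable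
  haveI : IsProbabilityMeasure πT := Measure.isProbabilityMeasure_map hT.aemeasurable
  set w1 : ε → ℝ≥0∞ := ν.rnDeriv πS with hw1
  set w2 : δ → ℝ≥0∞ := ρ.rnDeriv πT with hw2
  have hw1m : Measurable w1 := Measure.measurable_rnDeriv _ _
  have hw2m : Measurable w2 := Measure.measurable_rnDeriv _ _
  haveI hB' : IsProbabilityMeasure (A.withDensity fun z => w1 (S z)) := hupdB ▸ inferInstance
  haveI hC' : IsProbabilityMeasure (B.withDensity fun z => w2 (T z)) := hupdC ▸ inferInstance
  -- Step A : DPa with P := A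
  have hwfinA : ∀ᵐ z ∂A, w1 (S z) ≠ ∞ := by
    have h1 : ∀ᵐ y ∂πS, w1 y ≠ ∞ := by
      filter_upwards [Measure.rnDeriv_lt_top ν πS] with y hy using hy.ne
    exact (ae_map_iff hS.aemeasurable (hw1m (measurableSet_singleton ∞)).compl).1 h1
  have hBint : Integrable (fun z => Real.log ((w1 (S z)).toReal))
      (A.withDensity fun z => w1 (S z)) := by
    rw [← hupdB]
    refine (integrable_map_measure (g := fun y => Real.log ((w1 y).toReal))
      ((ENNReal.measurable_toReal.comp hw1m).log).aestronglyMeasurable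
      hS.aemeasurable).1 ?_
    rw [hBS]
    exact hintν
  have stepA := DPa A hT hS hw1m hwfinA hBint
  rw [← hupdB, ← hπT, hAT] at stepA
  obtain ⟨hmidInt, hmidle⟩ := stepA
  -- rewrite RHS of stepA as the entropy at A
  have hRA : ∫ z, Real.log ((w1 (S z)).toReal) ∂B = ∫ y, Real.log ((w1 y).toReal) ∂ν := by
    rw [← hBS]
    exact (integral_map (f := fun y => Real.log ((w1 y).toReal)) hS.aemeasurable
      ((ENNReal.measurable_toReal.comp hw1m).log).aestronglyMeasurable).symm
  rw [hRA] at hmidle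
  -- facts about w2 on πT
  have hBA : B ≪ A := by rw [hupdB]; exact withDensity_absolutelyContinuous _ _
  have hπTρ : πT ≪ ρ := by
    rw [hπT, ← hAT]
    exact hBA.map hT
  have hneg := neg_log_rnDeriv ρ πT hπTρ
  have hw2fin : ∀ᵐ x ∂πT, w2 x ≠ ∞ := by
    filter_upwards [Measure.rnDeriv_lt_top ρ πT] with x hx using hx.ne
  have hw20 : ∀ᵐ x ∂πT, w2 x ≠ 0 := by
    filter_upwards [Measure.inv_rnDeriv' hπTρ,
      hπTρ.ae_le (Measure.rnDeriv_lt_top πT ρ)] with x hx hfin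
    intro h0
    rw [← hx, Pi.inv_apply] at hfin
    rw [show (ρ.rnDeriv πT) x = w2 x from rfl, h0] at hfin
    simp at hfin
  -- Step B : DPb with P := B, roles of T and S swapped
  have hacB : B.map S ≪ (B.withDensity fun z => w2 (T z)).map S := by
    rw [hBS, ← hupdC]
    exact hacν'
  have hint1B : Integrable (fun x => Real.log
      (((B.map S).rnDeriv ((B.withDensity fun z => w2 (T z)).map S) x).toReal)) (B.map S) := by
    rw [hBS, ← hupdC]
    exact hintν'
  have hint2B : Integrable (fun z => Real.log ((w2 (T z)).toReal)) B := by
    refine (integrable_map_measure (g := fun x => Real.log ((w2 x).toReal))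
      ((ENNReal.measurable_toReal.comp hw2m).log).aestronglyMeasurable
      hT.aemeasurable).1 ?_
    refine (hmidInt.neg.congr ?_)
    filter_upwards [hneg] with x hx
    exact hx.symm
  have stepB := DPb B hS hT hw2m hacB
    ((ae_map_iff hT.aemeasurable (hw2m (measurableSet_singleton 0)).compl).1 hw20)
    ((ae_map_iff hT.aemeasurable (hw2m (measurableSet_singleton ∞)).compl).1 hw2fin)
    hint1B hint2B
  rw [hBS, ← hupdC] at stepB
  -- rewrite RHS of stepB as the middle quantity
  have hRB : - ∫ z, Real.log ((w2 (T z)).toReal) ∂B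
      = ∫ x, Real.log ((πT.rnDeriv ρ x).toReal) ∂πT := by
    have h1 : ∫ z, Real.log ((w2 (T z)).toReal) ∂B
        = ∫ x, Real.log ((w2 x).toReal) ∂πT := by
      rw [hπT]
      exact (integral_map (f := fun x => Real.log ((w2 x).toReal)) hT.aemeasurable
        ((ENNReal.measurable_toReal.comp hw2m).log).aestronglyMeasurable).symm
    rw [h1, ← integral_neg]
    refine integral_congr_ae ?_
    filter_upwards [hneg] with x hx
    rw [hx, neg_neg]
  rw [hRB] at stepB
  exact le_trans stepB hmidle


lemma rates (a b : ℕ → ℝ) (E0 : ℝ)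
    (ha0 : ∀ n, 0 ≤ a n) (hb0 : ∀ n, 0 ≤ b n)
    (haanti : ∀ n, a (n + 1) ≤ a n) (hbanti : ∀ n, b (n + 1) ≤ b n)
    (hsum : ∀ n, ∑ l ∈ Finset.range n, (a l + b l) ≤ E0) :
    (∀ n : ℕ, 1 ≤ n → max (a n) (b n) ≤ (1 / (n : ℝ)) * E0) ∧
    Tendsto (fun n : ℕ => (n : ℝ) * a n) atTop (nhds 0) := by
  have haA : Antitone a := antitone_nat_of_succ_le haanti
  have hbA : Antitone b := antitone_nat_of_succ_le hbanti
  have hna : ∀ n : ℕ, (n : ℝ) * a n ≤ E0 := by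
    intro n
    have h1 : (n : ℝ) * a n = ∑ _l ∈ Finset.range n, a n := by
      rw [Finset.sum_const, Finset.card_range, nsmul_eq_mul]
    have h2 : ∑ _l ∈ Finset.range n, a n ≤ ∑ l ∈ Finset.range n, a (l + 1) :=
      Finset.sum_le_sum fun l hl => haA (Nat.succ_le_of_lt (Finset.mem_range.1 hl))
    have h3 : ∑ l ∈ Finset.range n, a (l + 1) ≤ ∑ l ∈ Finset.range n, (a (l + 1) + b (l + 1)) :=
      Finset.sum_le_sum fun l _ => le_add_of_nonneg_right (hb0 _)
    have h4 : ∑ l ∈ Finset.range n, (a (l + 1) + b (l + 1)) ≤ E0 := by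
      have h5 := hsum (n + 1)
      rw [Finset.sum_range_succ'] at h5
      have : 0 ≤ a 0 + b 0 := add_nonneg (ha0 0) (hb0 0)
      linarith
    linarith
  have hnb : ∀ n : ℕ, (n : ℝ) * b n ≤ E0 := by
    intro n
    have h1 : (n : ℝ) * b n = ∑ _l ∈ Finset.range n, b n := by
      rw [Finset.sum_const, Finset.card_range, nsmul_eq_mul]
    have h2 : ∑ _l ∈ Finset.range n, b n ≤ ∑ l ∈ Finset.range n, b l :=
      Finset.sum_le_sum fun l hl => hbA (le_of_lt (Finset.mem_range.1 hl))
    have h3 : ∑ l ∈ Finset.range n, b l ≤ ∑ l ∈ Finset.range n, (a l + b l) :=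
      Finset.sum_le_sum fun l _ => le_add_of_nonneg_left (ha0 _)
    linarith [hsum n]
  constructor
  · intro n hn
    have hnpos : (0 : ℝ) < n := by exact_mod_cast hn
    refine max_le ?_ ?_
    · rw [one_div, inv_mul_eq_div, le_div_iff₀ hnpos, mul_comm]
      exact hna n
    · rw [one_div, inv_mul_eq_div, le_div_iff₀ hnpos, mul_comm]
      exact hnb n
  · -- summability
    have hsumm : Summable (fun l => a l + b l) :=
      summable_of_sum_range_le (fun l => add_nonneg (ha0 l) (hb0 l)) hsum
    have hsa : Summable a :=
      Summable.of_nonneg_of_le ha0 (fun l => le_add_of_nonneg_right (hb0 l)) hsumm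
    set A : ℕ → ℝ := fun n => ∑ l ∈ Finset.range n, a l with hAdef
    obtain ⟨S, hS⟩ := hsa
    have hAt : Tendsto A atTop (nhds S) := hS.tendsto_sum_nat
    have htail : Tendsto (fun n : ℕ => 2 * (A n - A (n / 2))) atTop (nhds 0) := by
      have h2 : Tendsto (fun n : ℕ => n / 2) atTop atTop := by
        refine tendsto_atTop_atTop.2 fun m => ⟨2 * m, fun n hn => ?_⟩
        omega
      have := (hAt.sub (hAt.comp h2)).const_mul (2 : ℝ)
      simpa using this
    have hle : ∀ n : ℕ, (n : ℝ) * a n ≤ 2 * (A n - A (n / 2)) := by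
      intro n
      have hcard : A n - A (n / 2) = ∑ l ∈ Finset.Ico (n / 2) n, a l := by
        rw [hAdef, Finset.sum_Ico_eq_sub _ (Nat.div_le_self n 2)]
      have hlow : ∑ l ∈ Finset.Ico (n / 2) n, a n ≤ ∑ l ∈ Finset.Ico (n / 2) n, a l :=
        Finset.sum_le_sum fun l hl => haA (le_of_lt (Finset.mem_Ico.1 hl).2)
      have hconst : ∑ _l ∈ Finset.Ico (n / 2) n, a n = ((n - n / 2 : ℕ) : ℝ) * a n := by
        rw [Finset.sum_const, Nat.card_Ico, nsmul_eq_mul]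
      have hhalf : (n : ℝ) ≤ 2 * ((n - n / 2 : ℕ) : ℝ) := by
        have : n ≤ 2 * (n - n / 2) := by omega
        exact_mod_cast this
      have h0 : 0 ≤ a n := ha0 n
      calc (n : ℝ) * a n ≤ 2 * ((n - n / 2 : ℕ) : ℝ) * a n := by nlinarith
        _ = 2 * (((n - n / 2 : ℕ) : ℝ) * a n) := by ring
        _ ≤ 2 * (A n - A (n / 2)) := by
            rw [hcard]
            have := hconst ▸ hlow
            linarith
    refine squeeze_zero (fun n => mul_nonneg (Nat.cast_nonneg n) (ha0 n)) hle htail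
  done


end SinkAux

end SinkAuxSection

open scoped ENNReal

/-- Under the Sinkhorn iteration (with iterates `P n` on `ℝ^d × ℝ^d` and marginals
`π (2n) = (P (2n)).map Prod.snd`, `π (2n+1) = (P (2n+1)).map Prod.fst`), for all `n ≥ 1`
one has `Ent(μ | π_{2n}) ⊔ Ent(η | π_{2n+1}) ≤ (1/n)·Ent(Q | P_0)` for any coupling `Q` of
`(η, μ)` with finite relative entropy with respect to `P_0`, and `n·Ent(μ | π_{2n}) → 0`. -/
theorem sinkhorn_sublinear_rates {d : ℕ}
    (η μ : Measure (Fin d → ℝ)) [IsProbabilityMeasure η] [IsProbabilityMeasure μ]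
    (P : ℕ → Measure ((Fin d → ℝ) × (Fin d → ℝ)))
    (hP : ∀ n, IsProbabilityMeasure (P n))
    (π : ℕ → Measure (Fin d → ℝ))
    (hπeven : ∀ n, π (2 * n) = (P (2 * n)).map Prod.snd)
    (hπodd : ∀ n, π (2 * n + 1) = (P (2 * n + 1)).map Prod.fst)
    (hmargX : ∀ n, (P (2 * n)).map Prod.fst = η)
    (hmargY : ∀ n, (P (2 * n + 1)).map Prod.snd = μ)
    (hupd1 : ∀ n, P (2 * n + 1) =
      (P (2 * n)).withDensity fun p => μ.rnDeriv (π (2 * n)) p.2)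
    (hupd2 : ∀ n, P (2 * n + 2) =
      (P (2 * n + 1)).withDensity fun p => η.rnDeriv (π (2 * n + 1)) p.1)
    (hacμ : ∀ n, μ ≪ π (2 * n)) (hacη : ∀ n, η ≪ π (2 * n + 1))
    (hintμ : ∀ n, Integrable (fun y => Real.log ((μ.rnDeriv (π (2 * n)) y).toReal)) μ)
    (hintη : ∀ n, Integrable (fun x => Real.log ((η.rnDeriv (π (2 * n + 1)) x).toReal)) η)
    (Q : Measure ((Fin d → ℝ) × (Fin d → ℝ))) [IsProbabilityMeasure Q]
    (hQX : Q.map Prod.fst = η) (hQY : Q.map Prod.snd = μ)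
    (hQac : Q ≪ P 0)
    (hQint : Integrable (fun p => Real.log ((Q.rnDeriv (P 0) p).toReal)) Q) :
    (∀ n : ℕ, 1 ≤ n →
      max (Ent μ (π (2 * n))) (Ent η (π (2 * n + 1))) ≤ (1 / (n : ℝ)) * Ent Q (P 0)) ∧
    Filter.Tendsto (fun n : ℕ => (n : ℝ) * Ent μ (π (2 * n))) Filter.atTop (nhds 0) := by
  classical
  set a : ℕ → ℝ := fun n => Ent μ (π (2 * n)) with hadef
  set b : ℕ → ℝ := fun n => Ent η (π (2 * n + 1)) with hbdef
  -- probability instances for the marginals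
  have instπe : ∀ n, IsProbabilityMeasure (π (2 * n)) := fun n => by
    haveI := hP (2 * n)
    rw [hπeven n]
    exact Measure.isProbabilityMeasure_map measurable_snd.aemeasurable
  have instπo : ∀ n, IsProbabilityMeasure (π (2 * n + 1)) := fun n => by
    haveI := hP (2 * n + 1)
    rw [hπodd n]
    exact Measure.isProbabilityMeasure_map measurable_fst.aemeasurable
  -- nonnegativity
  have ha0 : ∀ n, 0 ≤ a n := fun n => by
    haveI := instπe n
    exact SinkAux.gibbs μ (π (2 * n)) (hacμ n) (hintμ n)
  have hb0 : ∀ n, 0 ≤ b n := fun n => by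
    haveI := instπo n
    exact SinkAux.gibbs η (π (2 * n + 1)) (hacη n) (hintη n)
  -- Pythagorean sum identity by induction
  have haux : ∀ n, Q ≪ P (2 * n) ∧
      Integrable (fun z => Real.log ((Q.rnDeriv (P (2 * n)) z).toReal)) Q ∧
      Ent Q (P 0) = (∑ l ∈ Finset.range n, (a l + b l))
        + ∫ z, Real.log ((Q.rnDeriv (P (2 * n)) z).toReal) ∂Q := by
    intro n
    induction n with
    | zero =>
      refine ⟨hQac, hQint, ?_⟩
      simp only [Finset.range_zero, Finset.sum_empty, zero_add]
      exact rfl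
    | succ n ih =>
      obtain ⟨hacn, hintn, heqn⟩ := ih
      haveI := hP (2 * n); haveI := hP (2 * n + 1); haveI := hP (2 * n + 2)
      haveI := instπe n; haveI := instπo n
      haveI : μ.HaveLebesgueDecomposition (π (2 * n)) := Measure.haveLebesgueDecomposition_of_finiteMeasure
      haveI : η.HaveLebesgueDecomposition (π (2 * n + 1)) := Measure.haveLebesgueDecomposition_of_finiteMeasure
      haveI h1 : IsProbabilityMeasure
          ((P (2 * n)).withDensity fun z => μ.rnDeriv (π (2 * n)) z.2) := by
        rw [← hupd1 n]; infer_instance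
      have hw0μ : ∀ᵐ y ∂(Q.map Prod.snd), μ.rnDeriv (π (2 * n)) y ≠ 0 := by
        rw [hQY]
        filter_upwards [Measure.rnDeriv_pos (hacμ n)] with y hy using hy.ne'
      have hwfμ : ∀ᵐ y ∂(Q.map Prod.snd), μ.rnDeriv (π (2 * n)) y ≠ ∞ := by
        rw [hQY]
        filter_upwards [(hacμ n).ae_le (Measure.rnDeriv_lt_top μ (π (2 * n)))] with y hy
          using hy.ne
      have hwintμ : Integrable (fun y => Real.log ((μ.rnDeriv (π (2 * n)) y).toReal))
          (Q.map Prod.snd) := by rw [hQY]; exact hintμ n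
      have step1 := SinkAux.chain_step (P (2 * n)) Q measurable_snd
        (Measure.measurable_rnDeriv μ (π (2 * n))) hacn hw0μ hwfμ hintn hwintμ
      rw [← hupd1 n] at step1
      obtain ⟨hac1, hint1, heq1⟩ := step1
      haveI h2 : IsProbabilityMeasure
          ((P (2 * n + 1)).withDensity fun z => η.rnDeriv (π (2 * n + 1)) z.1) := by
        rw [← hupd2 n]; infer_instance
      have hw0η : ∀ᵐ x ∂(Q.map Prod.fst), η.rnDeriv (π (2 * n + 1)) x ≠ 0 := by
        rw [hQX]
        filter_upwards [Measure.rnDeriv_pos (hacη n)] with x hx using hx.ne'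
      have hwfη : ∀ᵐ x ∂(Q.map Prod.fst), η.rnDeriv (π (2 * n + 1)) x ≠ ∞ := by
        rw [hQX]
        filter_upwards [(hacη n).ae_le (Measure.rnDeriv_lt_top η (π (2 * n + 1)))] with x hx
          using hx.ne
      have hwintη : Integrable (fun x => Real.log ((η.rnDeriv (π (2 * n + 1)) x).toReal))
          (Q.map Prod.fst) := by rw [hQX]; exact hintη n
      have step2 := SinkAux.chain_step (P (2 * n + 1)) Q measurable_fst
        (Measure.measurable_rnDeriv η (π (2 * n + 1))) hac1 hw0η hwfη hint1 hwintη
      rw [← hupd2 n] at step2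
      obtain ⟨hac2, hint2, heq2⟩ := step2
      refine ⟨hac2, hint2, ?_⟩
      have e1 : ∫ y, Real.log ((μ.rnDeriv (π (2 * n)) y).toReal) ∂(Q.map Prod.snd)
          = a n := by rw [hQY]; rfl
      have e2 : ∫ x, Real.log ((η.rnDeriv (π (2 * n + 1)) x).toReal) ∂(Q.map Prod.fst)
          = b n := by rw [hQX]; rfl
      rw [e1] at heq1
      rw [e2] at heq2
      have hidx : 2 * (n + 1) = 2 * n + 2 := by ring
      rw [Finset.sum_range_succ, hidx]
      rw [heqn, heq1, heq2]
      ring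
  -- partial sums bounded
  have hsum : ∀ n, (∑ l ∈ Finset.range n, (a l + b l)) ≤ Ent Q (P 0) := by
    intro n
    obtain ⟨hacn, hintn, heqn⟩ := haux n
    haveI := hP (2 * n)
    have h0 : 0 ≤ ∫ z, Real.log ((Q.rnDeriv (P (2 * n)) z).toReal) ∂Q :=
      SinkAux.gibbs Q (P (2 * n)) hacn hintn
    linarith [heqn.symm.le, heqn.le]
  -- monotonicity of a
  have amono : ∀ l, a (l + 1) ≤ a l := by
    intro l
    haveI := hP (2 * l); haveI := hP (2 * l + 1); haveI := hP (2 * (l + 1))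
    have hupdB : P (2 * l + 1) = (P (2 * l)).withDensity
        (fun z => μ.rnDeriv ((P (2 * l)).map Prod.snd) (Prod.snd z)) := by
      rw [hupd1 l, hπeven l]
    have hupdC : P (2 * (l + 1)) = (P (2 * l + 1)).withDensity
        (fun z => η.rnDeriv ((P (2 * l + 1)).map Prod.fst) (Prod.fst z)) := by
      have h := hupd2 l
      rw [hπodd l] at h
      exact h
    have hacν' : μ ≪ (P (2 * (l + 1))).map Prod.snd := by
      have h := hacμ (l + 1)
      rw [hπeven (l + 1)] at h
      exact h
    have hintν : Integrable
        (fun y => Real.log ((μ.rnDeriv ((P (2 * l)).map Prod.snd) y).toReal)) μ := by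
      have h := hintμ l
      rw [hπeven l] at h
      exact h
    have hintν' : Integrable
        (fun y => Real.log ((μ.rnDeriv ((P (2 * (l + 1))).map Prod.snd) y).toReal)) μ := by
      have h := hintμ (l + 1)
      rw [hπeven (l + 1)] at h
      exact h
    have h := SinkAux.mono_step (P (2 * l)) (P (2 * l + 1)) (P (2 * (l + 1)))
      measurable_fst measurable_snd η μ (hmargX l) (hmargY l) hupdB hupdC hacν' hintν hintν'
    rw [← hπeven (l + 1), ← hπeven l] at h
    exact h
  -- monotonicity of b
  have bmono : ∀ l, b (l + 1) ≤ b l := by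
    intro l
    haveI := hP (2 * l + 1); haveI := hP (2 * (l + 1)); haveI := hP (2 * (l + 1) + 1)
    have hBS : (P (2 * (l + 1))).map Prod.fst = η := hmargX (l + 1)
    have hupdB : P (2 * (l + 1)) = (P (2 * l + 1)).withDensity
        (fun z => η.rnDeriv ((P (2 * l + 1)).map Prod.fst) (Prod.fst z)) := by
      have h := hupd2 l
      rw [hπodd l] at h
      exact h
    have hupdC : P (2 * (l + 1) + 1) = (P (2 * (l + 1))).withDensity
        (fun z => μ.rnDeriv ((P (2 * (l + 1))).map Prod.snd) (Prod.snd z)) := by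
      have h := hupd1 (l + 1)
      rw [hπeven (l + 1)] at h
      exact h
    have hacν' : η ≪ (P (2 * (l + 1) + 1)).map Prod.fst := by
      have h := hacη (l + 1)
      rw [hπodd (l + 1)] at h
      exact h
    have hintν : Integrable
        (fun x => Real.log ((η.rnDeriv ((P (2 * l + 1)).map Prod.fst) x).toReal)) η := by
      have h := hintη l
      rw [hπodd l] at h
      exact h
    have hintν' : Integrable
        (fun x => Real.log ((η.rnDeriv ((P (2 * (l + 1) + 1)).map Prod.fst) x).toReal)) η := by
      have h := hintη (l + 1)
      rw [hπodd (l + 1)] at h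
      exact h
    have h := SinkAux.mono_step (P (2 * l + 1)) (P (2 * (l + 1))) (P (2 * (l + 1) + 1))
      measurable_snd measurable_fst μ η (hmargY l) hBS hupdB hupdC hacν' hintν hintν'
    rw [← hπodd (l + 1), ← hπodd l] at h
    exact h
  exact SinkAux.rates a b (Ent Q (P 0)) ha0 hb0 amono bmono hsum
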